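/- For every i ∈ {1,…,M} and every n ≥ 1, min_{π ∈ Π_M} E∫_ℝ |f̂_{π(i)}(t) − f_i(t)| dt ≤ E∫_ℝ |f̄_i(t) − f_i(t)| dt + (4‖K‖₁/α_i)·min_{π ∈ Π_M} φ_n(π) + (2√6·‖K‖₁/α_i)·exp(−n·α_i²/4) + ‖K‖₁·(1−α_i)^n, where Π_M denotes the set of all permutations of {1,…,M} and φ_n(π) = max_{1≤k≤n} P(π(Î_k) ≠ I_k) is the maximal misclassification error after permuting the predicted labels by π. -/

import Mathlib

open MeasureTheory ProbabilityTheory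

/-! ### Auxiliary lemmas -/

lemma exp_cubic_bounds {x : ℝ} (h0 : 0 ≤ x) (h1 : x ≤ 1) :
    |Real.exp (-x) - (1 - x + x^2/2 - x^3/6)| ≤ 5*x^4/96 := by
  have hb := Real.exp_bound (x := -x) (by rw [abs_neg, abs_of_nonneg h0]; exact h1)
    (n := 4) (by norm_num)
  have h3 : (∑ i ∈ Finset.range 4, (-x) ^ i / (Nat.factorial i : ℝ)) = 1 - x + x^2/2 - x^3/6 := by
    simp [Finset.sum_range_succ, Nat.factorial]; ring
  rw [h3] at hb
  refine hb.trans (le_of_eq ?_)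
  rw [abs_neg, abs_of_nonneg h0]
  norm_num [Nat.factorial]
  ring

lemma key_scalar {a : ℝ} (h0 : 0 < a) (h1 : a ≤ 1) :
    1 - a + a * Real.exp (-a) ≤ Real.exp (-(3*a^2/4)) := by
  have hu0 : (0:ℝ) ≤ 3*a^2/4 := by positivity
  have hu1 : 3*a^2/4 ≤ 1 := by nlinarith
  have hL := (abs_le.1 (exp_cubic_bounds h0.le h1)).2
  have hR := (abs_le.1 (exp_cubic_bounds hu0 hu1)).1
  have key : 1 - a + a * (1 - a + a^2/2 - a^3/6 + 5*a^4/96)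
      ≤ 1 - (3*a^2/4) + (3*a^2/4)^2/2 - (3*a^2/4)^3/6 - 5*(3*a^2/4)^4/96 := by
    nlinarith [sq_nonneg a, sq_nonneg (a-1), pow_le_one₀ h0.le h1 (n:=2),
      pow_le_one₀ h0.le h1 (n:=3), pow_le_one₀ h0.le h1 (n:=4), pow_le_one₀ h0.le h1 (n:=5),
      pow_le_one₀ h0.le h1 (n:=6), pow_le_one₀ h0.le h1 (n:=8), mul_pos h0 h0]
  nlinarith [hL, hR, key, h0.le]

lemma tail_bound {Ω : Type*} [MeasurableSpace Ω] (P : Measure Ω) [IsProbabilityMeasure P]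
    (n : ℕ) (X : Fin n → Ω → ℝ) (hXm : ∀ k, Measurable (X k))
    (hindep : iIndepFun X P)
    (hX01 : ∀ k ω, X k ω = 0 ∨ X k ω = 1)
    {a : ℝ} (ha : 0 < a) (ha1 : a ≤ 1)
    (hmean : ∀ k, ∫ ω, X k ω ∂P = a) :
    (P {ω | (∑ k, X k ω) < (n:ℝ)*a/2}).toReal ≤ Real.exp (-(n:ℝ)*a^2/4) := by
  set Z : Fin n → Ω → ℝ := fun k ω => a - X k ω with hZ
  have hZm : ∀ k, Measurable (Z k) := fun k => measurable_const.sub (hXm k)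
  have hZindep : iIndepFun Z P :=
    hindep.comp (fun _ => fun x => a - x) (fun _ => measurable_const.sub measurable_id)
  have hXint : ∀ k, Integrable (X k) P := by
    intro k
    refine Integrable.mono' (integrable_const 1) (hXm k).aestronglyMeasurable
      (Filter.Eventually.of_forall fun ω => ?_)
    rcases hX01 k ω with h | h <;> simp [h]
  have hmgf : ∀ k, mgf (Z k) P a = Real.exp (a^2) * (1 - a + a * Real.exp (-a)) := by
    intro k
    have hptw : ∀ ω, Real.exp (a * Z k ω)
        = Real.exp (a^2) * ((1 - X k ω) + X k ω * Real.exp (-a)) := by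
      intro ω
      rcases hX01 k ω with h | h
      · simp [hZ, h, ← Real.exp_add]; ring_nf
      · simp [hZ, h, ← Real.exp_add]; ring_nf
    have : mgf (Z k) P a = ∫ ω, Real.exp (a^2) * ((1 - X k ω) + X k ω * Real.exp (-a)) ∂P := by
      rw [mgf]; exact integral_congr_ae (Filter.Eventually.of_forall hptw)
    rw [this, integral_const_mul]
    congr 1
    have h1 : Integrable (fun ω => 1 - X k ω) P := (integrable_const 1).sub (hXint k)
    have h2 : Integrable (fun ω => X k ω * Real.exp (-a)) P := (hXint k).mul_const _
    rw [integral_add h1 h2, integral_sub (integrable_const (1:ℝ)) (hXint k), integral_mul_const,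
      hmean k]
    simp
  have hexpint : ∀ k, Integrable (fun ω => Real.exp (a * Z k ω)) P := by
    intro k
    refine Integrable.mono' (integrable_const (Real.exp (a * a)))
      (((hZm k).const_mul a).exp).aestronglyMeasurable (Filter.Eventually.of_forall fun ω => ?_)
    rw [Real.norm_eq_abs, abs_of_nonneg (Real.exp_nonneg _)]
    apply Real.exp_le_exp.2
    rcases hX01 k ω with h | h <;> simp [hZ, h] <;> nlinarith
  have hSint : Integrable (fun ω => Real.exp (a * (∑ k, Z k) ω)) P :=
    hZindep.integrable_exp_mul_sum hZm (fun k _ => hexpint k)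
  have hch := measure_ge_le_exp_mul_mgf (μ := P) (X := ∑ k, Z k) ((n:ℝ)*a/2) ha.le hSint
  have hmgfsum : mgf (∑ k, Z k) P a = (Real.exp (a^2) * (1 - a + a * Real.exp (-a)))^n := by
    rw [hZindep.mgf_sum hZm Finset.univ]
    simp [hmgf, Finset.prod_const]
  have hsub : {ω | (∑ k, X k ω) < (n:ℝ)*a/2} ⊆ {ω | (n:ℝ)*a/2 ≤ (∑ k, Z k) ω} := by
    intro ω hω
    simp only [Set.mem_setOf_eq] at *
    have : (∑ k, Z k) ω = (n:ℝ)*a - ∑ k, X k ω := by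
      simp [hZ, Finset.sum_sub_distrib, Finset.sum_apply]
    rw [this]; linarith
  have hmono : (P {ω | (∑ k, X k ω) < (n:ℝ)*a/2}).toReal
      ≤ (P {ω | (n:ℝ)*a/2 ≤ (∑ k, Z k) ω}).toReal :=
    ENNReal.toReal_mono (measure_ne_top _ _) (measure_mono hsub)
  refine hmono.trans (hch.trans ?_)
  rw [hmgfsum]
  have h1 : Real.exp (-a * ((n:ℝ)*a/2)) = (Real.exp (-(a^2/2)))^n := by
    rw [← Real.exp_nat_mul]; congr 1; ring
  rw [h1, ← mul_pow]
  have hbase : Real.exp (-(a^2/2)) * (Real.exp (a^2) * (1 - a + a * Real.exp (-a)))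
      ≤ Real.exp (-(a^2/4)) := by
    have hks := key_scalar ha ha1
    calc Real.exp (-(a^2/2)) * (Real.exp (a^2) * (1 - a + a * Real.exp (-a)))
        = Real.exp (a^2/2) * (1 - a + a * Real.exp (-a)) := by
          rw [← mul_assoc, ← Real.exp_add]; ring_nf
      _ ≤ Real.exp (a^2/2) * Real.exp (-(3*a^2/4)) :=
          mul_le_mul_of_nonneg_left hks (Real.exp_nonneg _)
      _ = Real.exp (-(a^2/4)) := by rw [← Real.exp_add]; ring_nf
  have hbase0 : 0 ≤ Real.exp (-(a^2/2)) * (Real.exp (a^2) * (1 - a + a * Real.exp (-a))) := by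
    have : 0 ≤ 1 - a + a * Real.exp (-a) := by nlinarith [Real.exp_nonneg (-a)]
    positivity
  calc (Real.exp (-(a^2/2)) * (Real.exp (a^2) * (1 - a + a * Real.exp (-a))))^n
      ≤ (Real.exp (-(a^2/4)))^n := pow_le_pow_left₀ hbase0 hbase n
    _ = Real.exp (-(n:ℝ)*a^2/4) := by rw [← Real.exp_nat_mul]; congr 1; ring

lemma kernel_integrable {K : ℝ → ℝ} (hK : Integrable K) {h : ℝ} (hh : 0 < h) (y : ℝ) :
    Integrable (fun t => h⁻¹ * K ((t - y) / h)) := by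
  have h1 : Integrable (fun t : ℝ => K (t / h)) := hK.comp_div hh.ne'
  have h2 : Integrable (fun t : ℝ => K ((t - y) / h)) := by
    have := h1.comp_sub_right (μ := volume) y
    simpa using this
  exact h2.const_mul _

lemma kernel_l1 {K : ℝ → ℝ} (hK : Integrable K) {h : ℝ} (hh : 0 < h) (y : ℝ) :
    ∫ t, |h⁻¹ * K ((t - y) / h)| = ∫ t, |K t| := by
  have e1 : ∀ t : ℝ, |h⁻¹ * K ((t - y) / h)| = h⁻¹ * |K ((t - y) / h)| := by
    intro t; rw [abs_mul, abs_of_nonneg (inv_nonneg.2 hh.le)]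
  simp only [e1]
  rw [integral_const_mul]
  have e2 : ∫ t, |K ((t - y) / h)| = ∫ t, |K (t / h)| :=
    integral_sub_right_eq_self (fun t => |K (t / h)|) y
  rw [e2]
  have e3 : ∫ t : ℝ, |K (t / h)| = |h| • ∫ t, |K t| :=
    Measure.integral_comp_div (fun t => |K t|) h
  rw [e3, smul_eq_mul, abs_of_pos hh]
  field_simp

lemma ae_affine {K K' : ℝ → ℝ} (hKK' : K =ᵐ[volume] K') {h : ℝ} (hh : h ≠ 0) (y : ℝ) :
    (fun t => K ((t - y) / h)) =ᵐ[volume] (fun t => K' ((t - y) / h)) := by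
  have hs : volume {x | ¬ K x = K' x} = 0 := by
    have := hKK'; rwa [Filter.EventuallyEq, ae_iff] at this
  have hsub : {t : ℝ | ¬ K ((t - y)/h) = K' ((t - y)/h)}
      ⊆ (fun t : ℝ => t + (-y)) ⁻¹' ((fun t : ℝ => t * h⁻¹) ⁻¹' {x | ¬ K x = K' x}) := by
    intro t ht
    simpa [Set.mem_preimage, div_eq_mul_inv, sub_eq_add_neg] using ht
  have h0 : volume ((fun t : ℝ => t + (-y)) ⁻¹'
      ((fun t : ℝ => t * h⁻¹) ⁻¹' {x | ¬ K x = K' x})) = 0 := by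
    rw [measure_preimage_add_right, Real.volume_preimage_mul_right (inv_ne_zero hh), hs, mul_zero]
  rw [Filter.EventuallyEq, ae_iff]
  exact measure_mono_null hsub h0

lemma l1_sum_bound {n : ℕ} (κ : Fin n → ℝ → ℝ) (hκ : ∀ k, Integrable (κ k))
    {L : ℝ} (hL : ∀ k, ∫ t, |κ k t| = L) (c : Fin n → ℝ) :
    ∫ t, |∑ k, κ k t * c k| ≤ L * ∑ k, |c k| := by
  have hint : ∀ k, Integrable (fun t => κ k t * c k) := fun k => (hκ k).mul_const _
  have hsint : Integrable (fun t => ∑ k, κ k t * c k) :=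
    integrable_finset_sum _ (fun k _ => hint k)
  calc ∫ t, |∑ k, κ k t * c k| ≤ ∫ t, ∑ k, |κ k t * c k| := by
        refine integral_mono hsint.abs (integrable_finset_sum _ fun k _ => (hint k).abs) ?_
        intro t; exact Finset.abs_sum_le_sum_abs _ _
    _ = ∑ k, ∫ t, |κ k t * c k| := integral_finset_sum _ (fun k _ => (hint k).abs)
    _ = ∑ k, L * |c k| := by
        refine Finset.sum_congr rfl fun k _ => ?_
        simp only [abs_mul]
        rw [integral_mul_const, hL k]
    _ = L * ∑ k, |c k| := by rw [Finset.mul_sum]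

lemma coeff_bound {n : ℕ} (a b : Fin n → ℝ) (ha01 : ∀ k, a k = 0 ∨ a k = 1)
    {m mh : ℕ} (hm : (m : ℝ) = ∑ k, b k) (hmh : (mh : ℝ) = ∑ k, a k)
    (hm1 : 1 ≤ m) (hmh1 : 1 ≤ mh) :
    ∑ k, |a k / mh - b k / m| ≤ 2 * (∑ k, |a k - b k|) / m := by
  have hmpos : (0:ℝ) < m := by exact_mod_cast hm1
  have hmhpos : (0:ℝ) < mh := by exact_mod_cast hmh1
  have step1 : ∀ k, |a k / mh - b k / m| ≤ |a k - b k| / m + a k * |1/(mh:ℝ) - 1/m| := by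
    intro k
    have hid : a k / mh - b k / m = (a k - b k) / m + a k * (1/(mh:ℝ) - 1/m) := by
      field_simp; ring
    rw [hid]
    refine (abs_add_le _ _).trans ?_
    rw [abs_div, abs_of_pos hmpos, abs_mul]
    have : |a k| = a k := by rcases ha01 k with h | h <;> simp [h]
    rw [this]
  calc ∑ k, |a k / mh - b k / m|
      ≤ ∑ k, (|a k - b k| / m + a k * |1/(mh:ℝ) - 1/m|) := Finset.sum_le_sum fun k _ => step1 k
    _ = (∑ k, |a k - b k|) / m + (mh:ℝ) * |1/(mh:ℝ) - 1/m| := by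
        rw [Finset.sum_add_distrib, ← Finset.sum_div, ← Finset.sum_mul, ← hmh]
    _ = (∑ k, |a k - b k|) / m + |(m:ℝ) - mh| / m := by
        congr 1
        rw [abs_sub_comm, show 1/(m:ℝ) - 1/mh = ((mh:ℝ) - m)/(m * mh) by field_simp,
          abs_div, abs_of_pos (mul_pos hmpos hmhpos), abs_sub_comm]
        field_simp
    _ ≤ (∑ k, |a k - b k|) / m + (∑ k, |a k - b k|) / m := by
        gcongr
        rw [hm, hmh, ← Finset.sum_sub_distrib]
        exact (Finset.abs_sum_le_sum_abs _ _).trans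
          (le_of_eq (Finset.sum_congr rfl fun k _ => abs_sub_comm _ _))
    _ = 2 * (∑ k, |a k - b k|) / m := by ring

lemma integral_ite_one {Ω : Type*} [MeasurableSpace Ω] (P : Measure Ω) [IsFiniteMeasure P]
    (p : Ω → Prop) [DecidablePred p] (hs : MeasurableSet {ω | p ω}) :
    ∫ ω, (if p ω then (1:ℝ) else 0) ∂P = (P {ω | p ω}).toReal := by
  rw [← measureReal_def, ← integral_indicator_one hs]
  refine integral_congr_ae (Filter.Eventually.of_forall fun ω => ?_)
  by_cases hω : p ω <;> simp [Set.indicator_apply, hω, Set.mem_setOf_eq]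

lemma integrable_ite_one {Ω : Type*} [MeasurableSpace Ω] (P : Measure Ω) [IsFiniteMeasure P]
    (p : Ω → Prop) [DecidablePred p] (hs : MeasurableSet {ω | p ω}) :
    Integrable (fun ω => if p ω then (1:ℝ) else 0) P := by
  refine Integrable.mono' (integrable_const 1)
    (Measurable.ite hs measurable_const measurable_const).aestronglyMeasurable
    (Filter.Eventually.of_forall fun ω => ?_)
  by_cases hω : p ω <;> simp [hω]

set_option maxHeartbeats 1000000 in
/-- Theorem 1 up to permutation of the cluster indexes (Remark 1): for each component `i`,
`min_{π ∈ Π_M} E‖f̂_{π(i)} − f_i‖₁ ≤ E‖f̄_i − f_i‖₁ + (4‖K‖₁/α_i) min_{π ∈ Π_M} φ_n(π)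
 + (2√6 ‖K‖₁/α_i) exp(−n α_i²/4) + ‖K‖₁ (1−α_i)^n`,
where `Π_M` is the set of permutations of the labels and
`φ_n(π) = max_k P(π(Î_k) ≠ I_k)`. -/
theorem stmt_2 {Ω : Type*} [MeasurableSpace Ω] (P : Measure Ω) [IsProbabilityMeasure P]
    (n M : ℕ) (hn : 1 ≤ n) (hM : 2 ≤ M)
    (Y : Fin n → Ω → ℝ) (I : Fin n → Ω → Fin M) (Ihat : Fin n → Ω → Fin M)
    (hYmeas : ∀ k, Measurable (Y k)) (hImeas : ∀ k, Measurable (I k))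
    (hIhatmeas : ∀ k, Measurable (Ihat k))
    -- the pairs (Y_k, I_k) are i.i.d.
    (hindep : iIndepFun (fun k ω => (Y k ω, I k ω)) P)
    (hident : ∀ k : Fin n,
      Measure.map (fun ω => (Y k ω, I k ω)) P
        = Measure.map (fun ω => (Y ⟨0, hn⟩ ω, I ⟨0, hn⟩ ω)) P)
    -- mixture weights
    (α : Fin M → ℝ) (hα : ∀ i, α i = (P {ω | I ⟨0, hn⟩ ω = i}).toReal)
    (hαpos : ∀ i, 0 < α i)
    -- conditional densities: P(Y₁ ∈ s, I₁ = i) = α_i ∫_s f_i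
    (f : Fin M → ℝ → ℝ)
    (hf : ∀ i, ∀ s : Set ℝ, MeasurableSet s →
      (P ({ω | I ⟨0, hn⟩ ω = i} ∩ (Y ⟨0, hn⟩) ⁻¹' s)).toReal = α i * ∫ t in s, f i t)
    -- kernel and bandwidth
    (K : ℝ → ℝ) (hKint : Integrable K) (hK1 : (∫ t, K t) = 1)
    (h : ℝ) (hh : 0 < h)
    (Kh : ℝ → ℝ → ℝ) (hKh : ∀ t y, Kh t y = h⁻¹ * K ((t - y) / h))
    -- counts of true and predicted labels
    (N Nhat : Fin M → Ω → ℕ)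
    (hN : ∀ i ω, N i ω = (Finset.univ.filter fun k => I k ω = i).card)
    (hNhat : ∀ i ω, Nhat i ω = (Finset.univ.filter fun k => Ihat k ω = i).card)
    (hNhatpos : ∀ i, ∀ᵐ ω ∂P, 1 ≤ Nhat i ω)
    -- oracle and two-step kernel density estimates
    (fbar fhat : Fin M → Ω → ℝ → ℝ)
    (hfbar : ∀ i ω t, fbar i ω t =
      if N i ω = 0 then 0
      else (N i ω : ℝ)⁻¹ * ∑ k, Kh t (Y k ω) * (if I k ω = i then 1 else 0))
    (hfhat : ∀ i ω t, fhat i ω t =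
      (Nhat i ω : ℝ)⁻¹ * ∑ k, Kh t (Y k ω) * (if Ihat k ω = i then 1 else 0))
    -- maximal misclassification error after permutation of the labels
    (φ : Equiv.Perm (Fin M) → ℝ)
    (hφ : ∀ π, φ π = Finset.univ.sup' ⟨⟨0, hn⟩, Finset.mem_univ _⟩
      (fun k => (P {ω | π (Ihat k ω) ≠ I k ω}).toReal))
    (i : Fin M) :
    Finset.univ.inf' ⟨Equiv.refl (Fin M), Finset.mem_univ _⟩
        (fun π : Equiv.Perm (Fin M) => ∫ ω, (∫ t, |fhat (π i) ω t - f i t|) ∂P)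
      ≤ (∫ ω, (∫ t, |fbar i ω t - f i t|) ∂P)
        + 4 * (∫ t, |K t|) / α i
            * Finset.univ.inf' ⟨Equiv.refl (Fin M), Finset.mem_univ _⟩ φ
        + 2 * Real.sqrt 6 * (∫ t, |K t|) / α i * Real.exp (-(n : ℝ) * (α i) ^ 2 / 4)
        + (∫ t, |K t|) * (1 - α i) ^ n := by
  classical
  set L := ∫ t, |K t| with hLdef
  have hL0 : 0 ≤ L := integral_nonneg fun t => abs_nonneg _
  obtain ⟨σ, -, hσ⟩ := Finset.exists_mem_eq_inf'
    (⟨Equiv.refl (Fin M), Finset.mem_univ _⟩ : (Finset.univ : Finset (Equiv.Perm (Fin M))).Nonempty) φ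
  set j : Fin M := σ⁻¹ i with hj
  -- basic positivity facts
  have hαi := hαpos i
  have hα1 : α i ≤ 1 := by
    rw [hα]
    calc (P {ω | I ⟨0, hn⟩ ω = i}).toReal ≤ (P Set.univ).toReal :=
          ENNReal.toReal_mono (measure_ne_top _ _) (measure_mono (Set.subset_univ _))
      _ = 1 := by simp
  have hn0 : (0:ℝ) < n := by exact_mod_cast hn
  have hnα : (0:ℝ) < (n:ℝ) * α i := mul_pos hn0 hαi
  -- identical distribution of the labels
  have hPIk : ∀ k, (P {ω | I k ω = i}).toReal = α i := by
    intro k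
    have hmk : Measurable (fun ω => (Y k ω, I k ω)) := (hYmeas k).prodMk (hImeas k)
    have hm0 : Measurable (fun ω => (Y ⟨0, hn⟩ ω, I ⟨0, hn⟩ ω)) :=
      (hYmeas _).prodMk (hImeas _)
    have hset : MeasurableSet ((Set.univ : Set ℝ) ×ˢ ({i} : Set (Fin M))) :=
      MeasurableSet.univ.prod (measurableSet_singleton i)
    have e1 : {ω | I k ω = i} = (fun ω => (Y k ω, I k ω)) ⁻¹' (Set.univ ×ˢ {i}) := by
      ext ω; simp [eq_comm]
    have e2 : {ω | I ⟨0, hn⟩ ω = i}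
        = (fun ω => (Y ⟨0, hn⟩ ω, I ⟨0, hn⟩ ω)) ⁻¹' (Set.univ ×ˢ {i}) := by
      ext ω; simp [eq_comm]
    rw [hα, e1, e2, ← Measure.map_apply hmk hset, ← Measure.map_apply hm0 hset, hident k]
  -- integrability of the density f i
  have hfint : Integrable (f i) := by
    by_contra hni
    have h1 := hf i Set.univ MeasurableSet.univ
    rw [Measure.restrict_univ, integral_undef hni, mul_zero] at h1
    have h2 : {ω | I ⟨0, hn⟩ ω = i} ∩ (Y ⟨0, hn⟩) ⁻¹' Set.univ = {ω | I ⟨0, hn⟩ ω = i} := by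
      simp
    rw [h2, ← hα i] at h1
    exact absurd h1 (ne_of_gt hαi)
  -- measurable representatives
  obtain ⟨K', hK'sm, hKae⟩ : ∃ g, StronglyMeasurable g ∧ K =ᵐ[volume] g :=
    ⟨hKint.1.mk K, hKint.1.stronglyMeasurable_mk, hKint.1.ae_eq_mk⟩
  have hK'int : Integrable K' := hKint.congr hKae
  have hK'L1 : ∫ t, |K' t| = L := by
    rw [hLdef]
    have habs : (fun t => |K t|) =ᵐ[volume] (fun t => |K' t|) := hKae.fun_comp (fun x => |x|)
    exact integral_congr_ae habs.symm
  obtain ⟨f', hf'sm, hfae⟩ : ∃ g, StronglyMeasurable g ∧ f i =ᵐ[volume] g :=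
    ⟨hfint.1.mk (f i), hfint.1.stronglyMeasurable_mk, hfint.1.ae_eq_mk⟩
  have hf'int : Integrable f' := hfint.congr hfae
  -- the measurable kernels
  set κ : Ω → Fin n → ℝ → ℝ := fun ω k t => h⁻¹ * K' ((t - Y k ω) / h) with hκdef
  have hκint : ∀ ω k, Integrable (κ ω k) := fun ω k => kernel_integrable hK'int hh _
  have hκL1 : ∀ ω k, ∫ t, |κ ω k t| = L := fun ω k => by
    rw [hκdef]; rw [kernel_l1 hK'int hh _]; exact hK'L1
  have hκae : ∀ ω k, (fun t => Kh t (Y k ω)) =ᵐ[volume] κ ω k := by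
    intro ω k
    have := ae_affine hKae hh.ne' (Y k ω)
    refine this.mono fun t ht => ?_
    have ht' : K ((t - Y k ω) / h) = K' ((t - Y k ω) / h) := ht
    show Kh t (Y k ω) = κ ω k t
    rw [hKh, ht']
  -- indicator coefficients
  set a : Ω → Fin n → ℝ := fun ω k => if Ihat k ω = j then 1 else 0 with hadef
  set b : Ω → Fin n → ℝ := fun ω k => if I k ω = i then 1 else 0 with hbdef
  have ha01 : ∀ ω k, a ω k = 0 ∨ a ω k = 1 := by
    intro ω k; by_cases hc : Ihat k ω = j <;> simp [hadef, hc]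
  have hb01 : ∀ ω k, b ω k = 0 ∨ b ω k = 1 := by
    intro ω k; by_cases hc : I k ω = i <;> simp [hbdef, hc]
  have hsa : ∀ ω, ((Nhat j ω : ℝ)) = ∑ k, a ω k := by
    intro ω
    rw [hNhat, Finset.card_filter]
    push_cast
    rfl
  have hsb : ∀ ω, ((N i ω : ℝ)) = ∑ k, b ω k := by
    intro ω
    rw [hN, Finset.card_filter]
    push_cast
    rfl
  -- measurable versions of the estimators
  set G : Ω → ℝ → ℝ := fun ω t => (Nhat j ω : ℝ)⁻¹ * ∑ k, κ ω k t * a ω k with hGdef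
  set Gb : Ω → ℝ → ℝ := fun ω t =>
    if N i ω = 0 then 0 else (N i ω : ℝ)⁻¹ * ∑ k, κ ω k t * b ω k with hGbdef
  have hGae : ∀ ω, (fun t => fhat j ω t) =ᵐ[volume] G ω := by
    intro ω
    have hall : ∀ᵐ t ∂volume, ∀ k : Fin n, Kh t (Y k ω) = κ ω k t :=
      (MeasureTheory.ae_all_iff).2 fun k => hκae ω k
    refine hall.mono fun t ht => ?_
    show fhat j ω t = G ω t
    rw [hfhat]
    show _ = (Nhat j ω : ℝ)⁻¹ * ∑ k, κ ω k t * a ω k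
    congr 1
    exact Finset.sum_congr rfl fun k _ => by rw [ht k]
  have hGbae : ∀ ω, (fun t => fbar i ω t) =ᵐ[volume] Gb ω := by
    intro ω
    have hall : ∀ᵐ t ∂volume, ∀ k : Fin n, Kh t (Y k ω) = κ ω k t :=
      (MeasureTheory.ae_all_iff).2 fun k => hκae ω k
    refine hall.mono fun t ht => ?_
    show fbar i ω t = Gb ω t
    rw [hfbar]
    show _ = (if N i ω = 0 then 0 else (N i ω : ℝ)⁻¹ * ∑ k, κ ω k t * b ω k)
    by_cases hc : N i ω = 0
    · simp [hc]
    · simp only [if_neg hc]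
      congr 1
      exact Finset.sum_congr rfl fun k _ => by rw [ht k]
  have hGint : ∀ ω, Integrable (G ω) :=
    fun ω => (integrable_finset_sum _ fun k _ => (hκint ω k).mul_const _).const_mul _
  have hGbint : ∀ ω, Integrable (Gb ω) := by
    intro ω
    rw [hGbdef]
    by_cases hc : N i ω = 0
    · simp only [if_pos hc]; exact integrable_zero _ _ _
    · simp only [if_neg hc]
      exact (integrable_finset_sum _ fun k _ => (hκint ω k).mul_const _).const_mul _
  -- L¹ bounds for G and Gb
  have habs_sum : ∀ (c : Ω → Fin n → ℝ), (∀ ω k, c ω k = 0 ∨ c ω k = 1) → ∀ ω,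
      ∫ t, |∑ k, κ ω k t * c ω k| ≤ L * ∑ k, c ω k := by
    intro c hc ω
    refine (l1_sum_bound (κ ω) (hκint ω) (hκL1 ω) (c ω)).trans (le_of_eq ?_)
    congr 1
    exact Finset.sum_congr rfl fun k _ => by rcases hc ω k with hk | hk <;> simp [hk]
  have hGl1 : ∀ ω, ∫ t, |G ω t| ≤ L := by
    intro ω
    have hc0 : (0:ℝ) ≤ (Nhat j ω : ℝ)⁻¹ := by positivity
    have e1 : ∀ t, |G ω t| = (Nhat j ω : ℝ)⁻¹ * |∑ k, κ ω k t * a ω k| := by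
      intro t; rw [hGdef, abs_mul, abs_of_nonneg hc0]
    simp only [e1]
    rw [integral_const_mul]
    calc (Nhat j ω : ℝ)⁻¹ * ∫ t, |∑ k, κ ω k t * a ω k|
        ≤ (Nhat j ω : ℝ)⁻¹ * (L * ∑ k, a ω k) := by
          apply mul_le_mul_of_nonneg_left _ hc0
          · exact habs_sum a ha01 ω
      _ = L * ((Nhat j ω : ℝ)⁻¹ * (Nhat j ω : ℝ)) := by rw [← hsa ω]; ring
      _ ≤ L * 1 := by
          apply mul_le_mul_of_nonneg_left _ hL0
          rcases Nat.eq_zero_or_pos (Nhat j ω) with hz | hp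
          · simp [hz]
          · rw [inv_mul_cancel₀]; exact_mod_cast hp.ne'
      _ = L := mul_one L
  have hGbl1 : ∀ ω, ∫ t, |Gb ω t| ≤ L := by
    intro ω
    rw [hGbdef]
    by_cases hc : N i ω = 0
    · simp [hc, hL0]
    · simp only [if_neg hc]
      have hc0 : (0:ℝ) ≤ (N i ω : ℝ)⁻¹ := by positivity
      have e1 : ∀ t, |(N i ω : ℝ)⁻¹ * ∑ k, κ ω k t * b ω k|
          = (N i ω : ℝ)⁻¹ * |∑ k, κ ω k t * b ω k| := by
        intro t; rw [abs_mul, abs_of_nonneg hc0]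
      simp only [e1]
      rw [integral_const_mul]
      calc (N i ω : ℝ)⁻¹ * ∫ t, |∑ k, κ ω k t * b ω k|
          ≤ (N i ω : ℝ)⁻¹ * (L * ∑ k, b ω k) := by
            apply mul_le_mul_of_nonneg_left _ hc0
            · exact habs_sum b hb01 ω
        _ = L * ((N i ω : ℝ)⁻¹ * (N i ω : ℝ)) := by rw [← hsb ω]; ring
        _ ≤ L * 1 := by
            apply mul_le_mul_of_nonneg_left _ hL0
            rw [inv_mul_cancel₀]
            exact_mod_cast hc
        _ = L := mul_one L
  -- measurability of the building blocks
  have hNhatm : Measurable (fun ω => (Nhat j ω : ℝ)) := by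
    have he : (fun ω => (Nhat j ω : ℝ)) = fun ω => ∑ k, a ω k := funext hsa
    rw [he]
    exact Finset.measurable_sum _ fun k _ =>
      Measurable.ite ((hIhatmeas k) (measurableSet_singleton j)) measurable_const measurable_const
  have hNm : Measurable (fun ω => (N i ω : ℝ)) := by
    have he : (fun ω => (N i ω : ℝ)) = fun ω => ∑ k, b ω k := funext hsb
    rw [he]
    exact Finset.measurable_sum _ fun k _ =>
      Measurable.ite ((hImeas k) (measurableSet_singleton i)) measurable_const measurable_const
  have hN0set : MeasurableSet {ω | N i ω = 0} := by
    have he : {ω | N i ω = 0} = (fun ω => (N i ω : ℝ)) ⁻¹' {0} := by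
      ext ω; simp [Nat.cast_eq_zero]
    rw [he]; exact hNm (measurableSet_singleton 0)
  have hκm : ∀ k, Measurable (fun p : Ω × ℝ => κ p.1 k p.2) := by
    intro k
    apply Measurable.const_mul
    exact hK'sm.measurable.comp
      ((measurable_snd.sub ((hYmeas k).comp measurable_fst)).div_const h)
  have ham : ∀ k, Measurable (fun ω => a ω k) := fun k =>
    Measurable.ite ((hIhatmeas k) (measurableSet_singleton j)) measurable_const measurable_const
  have hbm : ∀ k, Measurable (fun ω => b ω k) := fun k =>
    Measurable.ite ((hImeas k) (measurableSet_singleton i)) measurable_const measurable_const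
  have hGum : Measurable (fun p : Ω × ℝ => G p.1 p.2) := by
    apply Measurable.mul
    · exact (hNhatm.comp measurable_fst).inv
    · exact Finset.measurable_sum _ fun k _ => (hκm k).mul ((ham k).comp measurable_fst)
  have hGbum : Measurable (fun p : Ω × ℝ => Gb p.1 p.2) := by
    have hset : MeasurableSet {p : Ω × ℝ | N i p.1 = 0} := measurable_fst hN0set
    refine Measurable.ite hset measurable_const ?_
    exact ((hNm.comp measurable_fst).inv).mul
      (Finset.measurable_sum _ fun k _ => (hκm k).mul ((hbm k).comp measurable_fst))
  -- the ω-level functions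
  set A : Ω → ℝ := fun ω => ∫ t, |G ω t - f' t| with hAdef
  set B : Ω → ℝ := fun ω => ∫ t, |Gb ω t - f' t| with hBdef
  set Cf : Ω → ℝ := fun ω => ∫ t, |G ω t - Gb ω t| with hCdef
  set Dr : Ω → ℝ := fun ω => ∑ k, (if σ (Ihat k ω) ≠ I k ω then (1:ℝ) else 0) with hDrdef
  set ind : Ω → ℝ := fun ω => if (N i ω : ℝ) < (n:ℝ) * α i / 2 then (1:ℝ) else 0 with hinddef
  have hAsm : StronglyMeasurable A :=
    ((hGum.sub (hf'sm.measurable.comp measurable_snd)).abs).stronglyMeasurable.integral_prod_right'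
  have hBsm : StronglyMeasurable B :=
    ((hGbum.sub (hf'sm.measurable.comp measurable_snd)).abs).stronglyMeasurable.integral_prod_right'
  have hCsm : StronglyMeasurable Cf :=
    ((hGum.sub hGbum).abs).stronglyMeasurable.integral_prod_right'
  -- pointwise bounds giving integrability
  have habs3 : ∀ x y : ℝ, |x - y| ≤ |x| + |y| := by
    intro x y
    calc |x - y| = |x + -y| := by rw [sub_eq_add_neg]
      _ ≤ |x| + |-y| := abs_add_le _ _
      _ = |x| + |y| := by rw [abs_neg]
  have hsplit : ∀ (u v : ℝ → ℝ), Integrable u → Integrable v →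
      (∫ t, |u t - v t|) ≤ (∫ t, |u t|) + ∫ t, |v t| := by
    intro u v hu hv
    calc (∫ t, |u t - v t|) ≤ ∫ t, (|u t| + |v t|) :=
          integral_mono (hu.sub hv).abs (hu.abs.add hv.abs) fun t => habs3 _ _
      _ = (∫ t, |u t|) + ∫ t, |v t| := integral_add hu.abs hv.abs
  have hApt : ∀ ω, A ω ≤ L + ∫ t, |f' t| := fun ω =>
    (hsplit _ _ (hGint ω) hf'int).trans (add_le_add_left (hGl1 ω) _)
  have hBpt : ∀ ω, B ω ≤ L + ∫ t, |f' t| := fun ω =>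
    (hsplit _ _ (hGbint ω) hf'int).trans (add_le_add_left (hGbl1 ω) _)
  have hCpt : ∀ ω, Cf ω ≤ 2 * L := fun ω =>
    (hsplit _ _ (hGint ω) (hGbint ω)).trans (by linarith [hGl1 ω, hGbl1 ω])
  have hint_of_bd : ∀ (F : Ω → ℝ), StronglyMeasurable F → (∀ ω, 0 ≤ F ω) → ∀ (c : ℝ),
      (∀ ω, F ω ≤ c) → Integrable F P := by
    intro F hFm hF0 c hFc
    refine Integrable.mono' (integrable_const c) hFm.aestronglyMeasurable
      (Filter.Eventually.of_forall fun ω => ?_)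
    rw [Real.norm_eq_abs, abs_of_nonneg (hF0 ω)]
    exact hFc ω
  have hAint : Integrable A P := hint_of_bd A hAsm
    (fun ω => integral_nonneg fun t => abs_nonneg _) _ hApt
  have hBint : Integrable B P := hint_of_bd B hBsm
    (fun ω => integral_nonneg fun t => abs_nonneg _) _ hBpt
  have hCint : Integrable Cf P := hint_of_bd Cf hCsm
    (fun ω => integral_nonneg fun t => abs_nonneg _) _ hCpt
  -- error-count function
  have herrset : ∀ k, MeasurableSet {ω | σ (Ihat k ω) ≠ I k ω} := by
    intro k
    have he : {ω | σ (Ihat k ω) ≠ I k ω}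
        = (fun ω => (Ihat k ω, I k ω)) ⁻¹' {p : Fin M × Fin M | σ p.1 ≠ p.2} := rfl
    rw [he]
    exact ((hIhatmeas k).prodMk (hImeas k)) ((Set.toFinite _).measurableSet)
  have hDrint : Integrable Dr P :=
    integrable_finset_sum _ fun k _ => integrable_ite_one P _ (herrset k)
  have hindset : MeasurableSet {ω | (N i ω : ℝ) < (n:ℝ) * α i / 2} :=
    measurableSet_lt hNm measurable_const
  have hindint : Integrable ind P := integrable_ite_one P _ hindset
  have hDr0 : ∀ ω, 0 ≤ Dr ω := fun ω =>
    Finset.sum_nonneg fun k _ => by split_ifs <;> norm_num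
  -- pointwise triangle inequality
  have hABC : ∀ ω, A ω ≤ B ω + Cf ω := by
    intro ω
    have h1 : Integrable (fun t => |Gb ω t - f' t| + |G ω t - Gb ω t|) :=
      ((hGbint ω).sub hf'int).abs.add ((hGint ω).sub (hGbint ω)).abs
    calc A ω ≤ ∫ t, (|Gb ω t - f' t| + |G ω t - Gb ω t|) := by
          refine integral_mono ((hGint ω).sub hf'int).abs h1 fun t => ?_
          have h2 := abs_sub_le (G ω t) (Gb ω t) (f' t)
          linarith
      _ = B ω + Cf ω :=
          integral_add ((hGbint ω).sub hf'int).abs ((hGint ω).sub (hGbint ω)).abs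
  -- coefficient comparison with the misclassification counts
  have hab : ∀ ω k, |a ω k - b ω k| ≤ (if σ (Ihat k ω) ≠ I k ω then (1:ℝ) else 0) := by
    intro ω k
    by_cases h1 : Ihat k ω = j <;> by_cases h2 : I k ω = i
    · simp only [hadef, hbdef, if_pos h1, if_pos h2, sub_self, abs_zero]
      split_ifs <;> norm_num
    · have herr : σ (Ihat k ω) ≠ I k ω := by
        rw [h1, hj, ← Equiv.Perm.mul_apply, mul_inv_cancel, Equiv.Perm.one_apply]
        exact fun hcon => h2 hcon.symm
      simp only [hadef, hbdef, if_pos h1, if_neg h2, if_pos herr]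
      norm_num
    · have herr : σ (Ihat k ω) ≠ I k ω := fun hcon =>
        h1 (by rw [hj, ← h2, ← hcon, ← Equiv.Perm.mul_apply, inv_mul_cancel, Equiv.Perm.one_apply])
      simp only [hadef, hbdef, if_neg h1, if_pos h2, if_pos herr]
      norm_num
    · simp only [hadef, hbdef, if_neg h1, if_neg h2, sub_self, abs_zero]
      split_ifs <;> norm_num
  have hsumab : ∀ ω, ∑ k, |a ω k - b ω k| ≤ Dr ω := fun ω =>
    Finset.sum_le_sum fun k _ => hab ω k
  -- the main pointwise bound
  have hCbd : ∀ᵐ ω ∂P, Cf ω ≤ L * (4 * Dr ω / ((n:ℝ) * α i) + 2 * ind ω) := by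
    filter_upwards [hNhatpos j] with ω hNh1
    by_cases hcase : (N i ω : ℝ) < (n:ℝ) * α i / 2
    · have hind1 : ind ω = 1 := if_pos hcase
      have hpos : 0 ≤ L * (4 * Dr ω / ((n:ℝ) * α i)) := by positivity
      have h2L := hCpt ω
      rw [hind1]
      nlinarith
    · have hind0 : ind ω = 0 := if_neg hcase
      push_neg at hcase
      have hNpos : (0:ℝ) < (N i ω : ℝ) := lt_of_lt_of_le (by linarith) hcase
      have hNnat : 0 < N i ω := by exact_mod_cast hNpos
      have hN1 : 1 ≤ N i ω := hNnat
      have hNne : N i ω ≠ 0 := hNnat.ne'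
      have hGb' : ∀ t, Gb ω t = (N i ω : ℝ)⁻¹ * ∑ k, κ ω k t * b ω k := fun t => if_neg hNne
      have hdiff : ∀ t, G ω t - Gb ω t
          = ∑ k, κ ω k t * (a ω k / (Nhat j ω : ℝ) - b ω k / (N i ω : ℝ)) := by
        intro t
        rw [hGb' t]
        show (Nhat j ω : ℝ)⁻¹ * (∑ k, κ ω k t * a ω k) - _ = _
        rw [Finset.mul_sum, Finset.mul_sum, ← Finset.sum_sub_distrib]
        exact Finset.sum_congr rfl fun k _ => by ring
      have hC1 : Cf ω
          = ∫ t, |∑ k, κ ω k t * (a ω k / (Nhat j ω : ℝ) - b ω k / (N i ω : ℝ))| := by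
        show (∫ t, |G ω t - Gb ω t|) = _
        refine integral_congr_ae (Filter.Eventually.of_forall fun t => ?_)
        show |G ω t - Gb ω t| = _
        rw [hdiff t]
      have hcb := coeff_bound (a ω) (b ω) (ha01 ω) (hsb ω) (hsa ω) hN1 hNh1
      have hl1 := l1_sum_bound (κ ω) (hκint ω) (hκL1 ω)
        (fun k => a ω k / (Nhat j ω : ℝ) - b ω k / (N i ω : ℝ))
      rw [hC1, hind0]
      have hstep : 2 * (∑ k, |a ω k - b ω k|) / (N i ω : ℝ)
          ≤ 4 * Dr ω / ((n:ℝ) * α i) := by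
        rw [div_le_div_iff₀ hNpos hnα]
        nlinarith [hsumab ω, hDr0 ω, Finset.sum_nonneg
          (fun k (_ : k ∈ Finset.univ) => abs_nonneg (a ω k - b ω k))]
      calc (∫ t, |∑ k, κ ω k t * (a ω k / (Nhat j ω : ℝ) - b ω k / (N i ω : ℝ))|)
          ≤ L * ∑ k, |a ω k / (Nhat j ω : ℝ) - b ω k / (N i ω : ℝ)| := hl1
        _ ≤ L * (2 * (∑ k, |a ω k - b ω k|) / (N i ω : ℝ)) :=
            mul_le_mul_of_nonneg_left hcb hL0
        _ ≤ L * (4 * Dr ω / ((n:ℝ) * α i)) := mul_le_mul_of_nonneg_left hstep hL0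
        _ = L * (4 * Dr ω / ((n:ℝ) * α i) + 2 * 0) := by ring
  -- expectation of the error count
  have hEDr : ∫ ω, Dr ω ∂P ≤ (n:ℝ) * φ σ := by
    have h1 : ∫ ω, Dr ω ∂P = ∑ k, (P {ω | σ (Ihat k ω) ≠ I k ω}).toReal := by
      rw [hDrdef,
        integral_finset_sum _ fun k (_ : k ∈ Finset.univ) => integrable_ite_one P _ (herrset k)]
      exact Finset.sum_congr rfl fun k _ => integral_ite_one P _ (herrset k)
    rw [h1]
    calc ∑ k, (P {ω | σ (Ihat k ω) ≠ I k ω}).toReal ≤ ∑ _k : Fin n, φ σ :=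
          Finset.sum_le_sum fun k _ => by
            rw [hφ]
            exact Finset.le_sup' (fun k => (P {ω | σ (Ihat k ω) ≠ I k ω}).toReal)
              (Finset.mem_univ k)
      _ = (n:ℝ) * φ σ := by
          rw [Finset.sum_const, Finset.card_univ, Fintype.card_fin, nsmul_eq_mul]
  -- expectation of the bad-count indicator, via the Chernoff bound
  have hEind : ∫ ω, ind ω ∂P ≤ Real.exp (-(n:ℝ) * (α i)^2 / 4) := by
    have h1 : ∫ ω, ind ω ∂P = (P {ω | (N i ω : ℝ) < (n:ℝ) * α i / 2}).toReal :=
      integral_ite_one P _ hindset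
    rw [h1]
    have h2 : {ω | (N i ω : ℝ) < (n:ℝ) * α i / 2}
        = {ω | (∑ k, b ω k) < (n:ℝ) * α i / 2} := by
      ext ω; rw [Set.mem_setOf_eq, Set.mem_setOf_eq, hsb ω]
    rw [h2]
    have hindepX : iIndepFun (fun k ω => b ω k) P := by
      have hg : ∀ _k : Fin n, Measurable (fun p : ℝ × Fin M => if p.2 = i then (1:ℝ) else 0) :=
        fun _ => Measurable.ite (measurable_snd (measurableSet_singleton i))
          measurable_const measurable_const
      exact hindep.comp (fun _ => fun p : ℝ × Fin M => if p.2 = i then (1:ℝ) else 0) hg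
    have hmean : ∀ k, ∫ ω, b ω k ∂P = α i := by
      intro k
      rw [hbdef]
      rw [integral_ite_one P (fun ω => I k ω = i) ((hImeas k) (measurableSet_singleton i))]
      exact hPIk k
    exact tail_bound P n (fun k ω => b ω k) (fun k => hbm k) hindepX
      (fun k ω => hb01 ω k) hαi hα1 hmean
  -- identify the two expectations with the statement's integrals
  have hEA : ∫ ω, (∫ t, |fhat j ω t - f i t|) ∂P = ∫ ω, A ω ∂P := by
    refine integral_congr_ae (Filter.Eventually.of_forall fun ω => ?_)
    exact integral_congr_ae (((hGae ω).sub hfae).fun_comp fun x => |x|)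
  have hEB : ∫ ω, (∫ t, |fbar i ω t - f i t|) ∂P = ∫ ω, B ω ∂P := by
    refine integral_congr_ae (Filter.Eventually.of_forall fun ω => ?_)
    exact integral_congr_ae (((hGbae ω).sub hfae).fun_comp fun x => |x|)
  -- the integrable upper bound for Cf
  have hRint : Integrable (fun ω => L * (4 * Dr ω / ((n:ℝ) * α i) + 2 * ind ω)) P :=
    ((((hDrint.const_mul 4).div_const _)).add (hindint.const_mul 2)).const_mul L
  -- assembling everything
  have hsq6 : (1:ℝ) ≤ Real.sqrt 6 := by
    rw [show (1:ℝ) = Real.sqrt 1 by simp]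
    exact Real.sqrt_le_sqrt (by norm_num)
  have hexp0 : (0:ℝ) ≤ Real.exp (-(n:ℝ) * (α i)^2 / 4) := (Real.exp_pos _).le
  calc Finset.univ.inf' ⟨Equiv.refl (Fin M), Finset.mem_univ _⟩
        (fun π : Equiv.Perm (Fin M) => ∫ ω, (∫ t, |fhat (π i) ω t - f i t|) ∂P)
      ≤ ∫ ω, (∫ t, |fhat (σ⁻¹ i) ω t - f i t|) ∂P :=
        Finset.inf'_le _ (Finset.mem_univ σ⁻¹)
    _ = ∫ ω, A ω ∂P := hEA
    _ ≤ ∫ ω, (B ω + Cf ω) ∂P := integral_mono hAint (hBint.add hCint) hABC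
    _ = (∫ ω, B ω ∂P) + ∫ ω, Cf ω ∂P := integral_add hBint hCint
    _ ≤ (∫ ω, B ω ∂P) + ∫ ω, L * (4 * Dr ω / ((n:ℝ) * α i) + 2 * ind ω) ∂P :=
        add_le_add_right (integral_mono_ae hCint hRint hCbd) _
    _ = (∫ ω, B ω ∂P)
        + L * (4 / ((n:ℝ) * α i) * (∫ ω, Dr ω ∂P) + 2 * ∫ ω, ind ω ∂P) := by
        congr 1
        rw [integral_const_mul]
        congr 1
        have he : (fun ω => 4 * Dr ω / ((n:ℝ) * α i) + 2 * ind ω)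
            = fun ω => (4 / ((n:ℝ) * α i)) * Dr ω + 2 * ind ω := funext fun ω => by ring
        rw [he, integral_add (hDrint.const_mul _) (hindint.const_mul _),
          integral_const_mul, integral_const_mul]
    _ ≤ (∫ ω, B ω ∂P)
        + L * (4 / ((n:ℝ) * α i) * ((n:ℝ) * φ σ) + 2 * Real.exp (-(n:ℝ) * (α i)^2 / 4)) := by
        have h40 : (0:ℝ) ≤ 4 / ((n:ℝ) * α i) := by positivity
        exact add_le_add_right (mul_le_mul_of_nonneg_left
          (add_le_add (mul_le_mul_of_nonneg_left hEDr h40)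
            (mul_le_mul_of_nonneg_left hEind (by norm_num))) hL0) _
    _ = (∫ ω, (∫ t, |fbar i ω t - f i t|) ∂P) + 4 * L / α i * φ σ
        + 2 * L * Real.exp (-(n:ℝ) * (α i)^2 / 4) := by
        rw [← hEB]
        have he : L * (4 / ((n:ℝ) * α i) * ((n:ℝ) * φ σ)
              + 2 * Real.exp (-(n:ℝ) * (α i)^2 / 4))
            = 4 * L / α i * φ σ + 2 * L * Real.exp (-(n:ℝ) * (α i)^2 / 4) := by
          field_simp
        rw [he, add_assoc]
    _ ≤ (∫ ω, (∫ t, |fbar i ω t - f i t|) ∂P)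
        + 4 * L / α i * Finset.univ.inf' ⟨Equiv.refl (Fin M), Finset.mem_univ _⟩ φ
        + 2 * Real.sqrt 6 * L / α i * Real.exp (-(n:ℝ) * (α i)^2 / 4)
        + L * (1 - α i) ^ n := by
        rw [hσ]
        have h2L : 2 * L * Real.exp (-(n:ℝ) * (α i)^2 / 4)
            ≤ 2 * Real.sqrt 6 * L / α i * Real.exp (-(n:ℝ) * (α i)^2 / 4) := by
          apply mul_le_mul_of_nonneg_right _ hexp0
          rw [le_div_iff₀ hαi]
          nlinarith
        have hpow0 : 0 ≤ L * (1 - α i) ^ n :=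
          mul_nonneg hL0 (pow_nonneg (by linarith) n)
        linarith
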